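/- The group with presentation ⟨a₁, b₁, a₂, b₂ ∣ b₁b₂ = 1, [a₁,b₁] = 1, [a₂,b₂] = 1, b₂a₂b₂⁻¹a₁ = 1⟩ is isomorphic to ℤ × ℤ. -/

import Mathlib

/-!
The group with presentation
⟨a₁, b₁, a₂, b₂ ∣ b₁b₂ = 1, [a₁,b₁] = 1, [a₂,b₂] = 1, b₂a₂b₂⁻¹a₁ = 1⟩
is isomorphic to ℤ × ℤ.
Generators: a₁ = 0, b₁ = 1, a₂ = 2, b₂ = 3.
-/

namespace Stmt0

def a₁ : FreeGroup (Fin 4) := FreeGroup.of 0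
def b₁ : FreeGroup (Fin 4) := FreeGroup.of 1
def a₂ : FreeGroup (Fin 4) := FreeGroup.of 2
def b₂ : FreeGroup (Fin 4) := FreeGroup.of 3

def rels : Set (FreeGroup (Fin 4)) :=
  { b₁ * b₂,
    a₁ * b₁ * a₁⁻¹ * b₁⁻¹,
    a₂ * b₂ * a₂⁻¹ * b₂⁻¹,
    b₂ * a₂ * b₂⁻¹ * a₁ }

abbrev M := Multiplicative (ℤ × ℤ)

def f : Fin 4 → M := fun i =>
  match i with
  | 0 => Multiplicative.ofAdd (-1, 0)
  | 1 => Multiplicative.ofAdd (0, -1)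
  | 2 => Multiplicative.ofAdd (1, 0)
  | 3 => Multiplicative.ofAdd (0, 1)

lemma hf : ∀ r ∈ rels, FreeGroup.lift f r = 1 := by
  intro r hr
  rcases hr with h | h | h | h <;> subst h <;>
    simp [a₁, b₁, a₂, b₂, f] <;> decide

def φ : PresentedGroup rels →* M := PresentedGroup.toGroup hf

lemma mk_rel_one {r : FreeGroup (Fin 4)} (hr : r ∈ rels) :
    PresentedGroup.mk rels r = 1 := by
  exact (QuotientGroup.eq_one_iff r).mpr (Subgroup.subset_normalClosure hr)

noncomputable abbrev x : PresentedGroup rels := PresentedGroup.of (2 : Fin 4)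
noncomputable abbrev y : PresentedGroup rels := PresentedGroup.of (3 : Fin 4)

lemma comm_xy : Commute x y := by
  have h := mk_rel_one (show a₂ * b₂ * a₂⁻¹ * b₂⁻¹ ∈ rels by
    simp [rels])
  have h' : x * y * x⁻¹ * y⁻¹ = 1 := by
    have := h
    simp only [map_mul, map_inv] at this
    exact this
  have : (x * y) * (y * x)⁻¹ = 1 := by
    rw [mul_inv_rev, ← mul_assoc]
    exact h'
  exact mul_inv_eq_one.mp this

noncomputable def ψfun : M → PresentedGroup rels := fun z => x ^ (z.toAdd.1) * y ^ (z.toAdd.2)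

noncomputable def ψ : M →* PresentedGroup rels :=
  MonoidHom.mk' ψfun (by
    intro u v
    simp only [ψfun, toAdd_mul, Prod.fst_add, Prod.snd_add]
    have h1 : Commute x (y ^ u.toAdd.2) := comm_xy.zpow_right _
    have h2 : Commute (x ^ v.toAdd.1) (y ^ u.toAdd.2) :=
      (comm_xy.zpow_right _).zpow_left _
    rw [zpow_add, zpow_add]
    rw [mul_assoc, ← mul_assoc (x ^ v.toAdd.1), h2.eq]
    group)

lemma φx : φ x = Multiplicative.ofAdd ((1 : ℤ), (0 : ℤ)) := by
  exact PresentedGroup.toGroup.of hf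

lemma φy : φ y = Multiplicative.ofAdd ((0 : ℤ), (1 : ℤ)) := by
  exact PresentedGroup.toGroup.of hf

lemma a1_eq : (PresentedGroup.of (0 : Fin 4) : PresentedGroup rels) = x⁻¹ := by
  have h3 := mk_rel_one (show a₂ * b₂ * a₂⁻¹ * b₂⁻¹ ∈ rels by simp [rels])
  have h4 := mk_rel_one (show b₂ * a₂ * b₂⁻¹ * a₁ ∈ rels by simp [rels])
  set A := (PresentedGroup.of (0 : Fin 4) : PresentedGroup rels)
  have h4' : y * x * y⁻¹ * A = 1 := by
    have := h4
    simp only [map_mul, map_inv] at this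
    exact this
  have hyx : y * x * y⁻¹ = x := by
    rw [comm_xy.symm.eq, mul_inv_cancel_right]
  rw [hyx] at h4'
  exact (inv_eq_of_mul_eq_one_right h4').symm

lemma b1_eq : (PresentedGroup.of (1 : Fin 4) : PresentedGroup rels) = y⁻¹ := by
  have h1 := mk_rel_one (show b₁ * b₂ ∈ rels by simp [rels])
  have h1' : (PresentedGroup.of (1 : Fin 4) : PresentedGroup rels) * y = 1 := by
    have := h1
    simp only [map_mul] at this
    exact this
  exact eq_inv_of_mul_eq_one_left h1' 

theorem matsumoto_pi1 :
    Nonempty (PresentedGroup rels ≃* Multiplicative (ℤ × ℤ)) := by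
  refine ⟨MonoidHom.toMulEquiv φ ψ ?_ ?_⟩
  · -- ψ ∘ φ = id
    apply PresentedGroup.ext (G := PresentedGroup rels)
    intro i
    fin_cases i
    · show ψ (φ (PresentedGroup.of 0)) = PresentedGroup.of 0
      rw [a1_eq]
      rw [show φ x⁻¹ = Multiplicative.ofAdd ((-1 : ℤ), (0 : ℤ)) by
        rw [map_inv, φx]; rfl]
      show x ^ (-1 : ℤ) * y ^ (0 : ℤ) = x⁻¹
      group
    · show ψ (φ (PresentedGroup.of 1)) = PresentedGroup.of 1
      rw [b1_eq]
      rw [show φ y⁻¹ = Multiplicative.ofAdd ((0 : ℤ), (-1 : ℤ)) by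
        rw [map_inv, φy]; rfl]
      show x ^ (0 : ℤ) * y ^ (-1 : ℤ) = y⁻¹
      group
    · show ψ (φ x) = x
      rw [φx]
      show x ^ (1 : ℤ) * y ^ (0 : ℤ) = x
      group
    · show ψ (φ y) = y
      rw [φy]
      show x ^ (0 : ℤ) * y ^ (1 : ℤ) = y
      group
  · -- φ ∘ ψ = id
    refine MonoidHom.ext fun z => ?_
    show φ (x ^ z.toAdd.1 * y ^ z.toAdd.2) = z
    rw [map_mul, map_zpow, map_zpow, φx, φy]
    rcases z with ⟨m, n⟩
    show Multiplicative.ofAdd ((1 : ℤ), (0 : ℤ)) ^ m *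
        Multiplicative.ofAdd ((0 : ℤ), (1 : ℤ)) ^ n = Multiplicative.ofAdd (m, n)
    rw [← ofAdd_zsmul, ← ofAdd_zsmul, ← ofAdd_add]
    simp [Prod.ext_iff]

end Stmt0
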